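/- Let ℓ₁, ℓ₂, ℓ₃ be lines in P³, i.e., 2-dimensional subspaces of ℂ⁴, and for each i let P_i be the primal Plücker matrix of a basis of ℓ_i. Then the following are equivalent: (i) the three lines are concurrent, i.e., there exists a nonzero v ∈ ℓ₁ ∩ ℓ₂ ∩ ℓ₃; (ii) the lines are pairwise intersecting (ℓ_i ∩ ℓ_j ≠ {0} for all i < j) and for each standard basis vector u ∈ {e₁, e₂, e₃, e₄} of ℂ⁴, the three vectors P₁u, P₂u, P₃u ∈ ℂ⁴ are linearly dependent. -/

import Mathlib

open Matrix

/-- The primal Plücker matrix of a pair of vectors `x y : ℂ⁴`. -/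
noncomputable def primalMat (x y : Fin 4 → ℂ) : Matrix (Fin 4) (Fin 4) ℂ :=
  !![0, x 2 * y 3 - x 3 * y 2, -(x 1 * y 3 - x 3 * y 1), x 1 * y 2 - x 2 * y 1;
     -(x 2 * y 3 - x 3 * y 2), 0, x 0 * y 3 - x 3 * y 0, -(x 0 * y 2 - x 2 * y 0);
     x 1 * y 3 - x 3 * y 1, -(x 0 * y 3 - x 3 * y 0), 0, x 0 * y 1 - x 1 * y 0;
     -(x 1 * y 2 - x 2 * y 1), x 0 * y 2 - x 2 * y 0, -(x 0 * y 1 - x 1 * y 0), 0]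

lemma pm_x (x y : Fin 4 → ℂ) : primalMat x y *ᵥ x = 0 := by
  funext i; fin_cases i <;>
    simp [primalMat, mulVec, dotProduct, Fin.sum_univ_four] <;> ring

lemma pm_y (x y : Fin 4 → ℂ) : primalMat x y *ᵥ y = 0 := by
  funext i; fin_cases i <;>
    simp [primalMat, mulVec, dotProduct, Fin.sum_univ_four] <;> ring

lemma pm_skew (x y u w : Fin 4 → ℂ) :
    u ⬝ᵥ (primalMat x y *ᵥ w) = -(w ⬝ᵥ (primalMat x y *ᵥ u)) := by
  simp [primalMat, mulVec, dotProduct, Fin.sum_univ_four]; ring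

lemma pm_dot_det (x y u w : Fin 4 → ℂ) :
    u ⬝ᵥ (primalMat x y *ᵥ w) = (Matrix.of ![x,y,u,w]).det := by
  have h : Matrix.of ![x,y,u,w] =
      !![x 0, x 1, x 2, x 3; y 0, y 1, y 2, y 3; u 0, u 1, u 2, u 3; w 0, w 1, w 2, w 3] := by
    ext i j; fin_cases i <;> fin_cases j <;> rfl
  rw [h, Matrix.det_succ_row_zero]
  simp [primalMat, mulVec, dotProduct, Fin.sum_univ_four, Fin.sum_univ_succ, Matrix.det_fin_three,
    Fin.succAbove]
  ring

lemma pm_mem_zero {x y v : Fin 4 → ℂ} (h : v ∈ Submodule.span ℂ {x, y}) :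
    primalMat x y *ᵥ v = 0 := by
  obtain ⟨s, t, rfl⟩ := Submodule.mem_span_pair.mp h
  simp [Matrix.mulVec_add, Matrix.mulVec_smul, pm_x, pm_y]

lemma pm_dot_mem_zero {x y v : Fin 4 → ℂ} (h : v ∈ Submodule.span ℂ {x, y}) (u : Fin 4 → ℂ) :
    v ⬝ᵥ (primalMat x y *ᵥ u) = 0 := by
  rw [pm_skew, pm_mem_zero h]; simp

lemma li_triple {a b c : Fin 4 → ℂ} (h : LinearIndependent ℂ ![a, b])
    (hc : c ∉ Submodule.span ℂ {a, b}) : LinearIndependent ℂ ![a, b, c] := by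
  have he : ![a, b, c] = Fin.snoc ![a, b] c := by
    funext i; fin_cases i <;> simp [Fin.snoc] <;> rfl
  rw [he, linearIndependent_fin_snoc]
  exact ⟨h, by rwa [Matrix.range_cons_cons_empty]⟩

lemma li_quad {a b c d : Fin 4 → ℂ} (h : LinearIndependent ℂ ![a, b, c])
    (hd : d ∉ Submodule.span ℂ {a, b, c}) : LinearIndependent ℂ ![a, b, c, d] := by
  have he : ![a, b, c, d] = Fin.snoc ![a, b, c] d := by
    funext i; fin_cases i <;> simp [Fin.snoc] <;> rfl
  rw [he, linearIndependent_fin_snoc]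
  refine ⟨h, ?_⟩
  have : Set.range ![a, b, c] = {a, b, c} := by
    ext z; simp [Matrix.range_cons, Matrix.range_empty]; tauto
  rwa [this]

lemma pm_dot_ne_zero {x y u w : Fin 4 → ℂ} (h : LinearIndependent ℂ ![x, y, u, w]) :
    u ⬝ᵥ (primalMat x y *ᵥ w) ≠ 0 := by
  rw [pm_dot_det]
  have hu : IsUnit (Matrix.of ![x, y, u, w]) :=
    Matrix.linearIndependent_rows_iff_isUnit.mp h
  exact (Matrix.isUnit_iff_isUnit_det _ |>.mp hu).ne_zero

open Module

lemma pm_diag (x y : Fin 4 → ℂ) (b : Fin 4) : primalMat x y b b = 0 := by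
  fin_cases b <;> simp [primalMat]

lemma pm_single_apply (x y : Fin 4 → ℂ) (b : Fin 4) :
    (primalMat x y *ᵥ Pi.single b 1) b = 0 := by
  rw [Matrix.mulVec_single]
  simp [pm_diag]

lemma forward_dep (x y : Fin 3 → Fin 4 → ℂ) (ℓ : Fin 3 → Submodule ℂ (Fin 4 → ℂ))
    (hspan : ∀ i, ℓ i = Submodule.span ℂ {x i, y i})
    (v : Fin 4 → ℂ) (hv0 : v ≠ 0) (hv : ∀ i, v ∈ ℓ i) (b : Fin 4) :
    ¬ LinearIndependent ℂ
          ![primalMat (x 0) (y 0) *ᵥ Pi.single b 1,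
            primalMat (x 1) (y 1) *ᵥ Pi.single b 1,
            primalMat (x 2) (y 2) *ᵥ Pi.single b 1] := by
  have hmem : ∀ i, v ∈ Submodule.span ℂ {x i, y i} := fun i => (hspan i) ▸ hv i
  by_cases hcase : ∀ j, j ≠ b → v j = 0
  · -- v is a multiple of the standard basis vector
    have hvb : v b ≠ 0 := by
      intro h0
      apply hv0
      funext j
      by_cases hj : j = b
      · rw [hj]; exact h0
      · exact hcase j hj
    have he' : (Pi.single b 1 : Fin 4 → ℂ) = (v b)⁻¹ • v := by
      funext j
      by_cases hj : j = b
      · subst hj; simp [Pi.single_apply, inv_mul_cancel₀ hvb]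
      · simp [Pi.single_apply, hj, hcase j hj]
    have hπ0 : primalMat (x 0) (y 0) *ᵥ Pi.single b 1 = 0 := by
      apply pm_mem_zero
      rw [he']
      exact Submodule.smul_mem _ _ (hmem 0)
    intro hI
    exact hI.ne_zero 0 (by simpa using hπ0)
  · push_neg at hcase
    obtain ⟨j, hjb, hvj⟩ := hcase
    intro hI
    set π : Fin 3 → (Fin 4 → ℂ) :=
      ![primalMat (x 0) (y 0) *ᵥ Pi.single b 1,
        primalMat (x 1) (y 1) *ᵥ Pi.single b 1,
        primalMat (x 2) (y 2) *ᵥ Pi.single b 1] with hπdef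
    let f1 : (Fin 4 → ℂ) →ₗ[ℂ] ℂ :=
      { toFun := fun w => v ⬝ᵥ w
        map_add' := fun p q => dotProduct_add v p q
        map_smul' := fun t p => by simp }
    let g : (Fin 4 → ℂ) →ₗ[ℂ] ℂ × ℂ := f1.prod (LinearMap.proj b)
    have hsurj : Function.Surjective g := by
      rintro ⟨s, t⟩
      refine ⟨t • (Pi.single b 1 : Fin 4 → ℂ) + ((s - t * v b) / v j) • (Pi.single j 1 : Fin 4 → ℂ), ?_⟩
      have h1 : v ⬝ᵥ (t • (Pi.single b 1 : Fin 4 → ℂ) + ((s - t * v b) / v j) • (Pi.single j 1 : Fin 4 → ℂ)) = s := by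
        simp [dotProduct_add, dotProduct_smul, dotProduct_single, smul_eq_mul]
        field_simp
        ring
      have h2 : (t • (Pi.single b 1 : Fin 4 → ℂ) + ((s - t * v b) / v j) • (Pi.single j 1 : Fin 4 → ℂ)) b = t := by
        simp [Pi.single_apply, hjb, Ne.symm hjb]
      simp only [g, f1, LinearMap.prod_apply, LinearMap.coe_mk, AddHom.coe_mk, LinearMap.proj_apply,
        Function.prod]
      rw [Prod.mk.injEq]
      exact ⟨h1, h2⟩
    have hrange : LinearMap.range g = ⊤ := LinearMap.range_eq_top.mpr hsurj
    have hker : finrank ℂ (LinearMap.ker g) = 2 := by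
      have hrn := LinearMap.finrank_range_add_finrank_ker g
      rw [hrange, finrank_top] at hrn
      have h4 : finrank ℂ (Fin 4 → ℂ) = 4 := by simp
      have h2 : finrank ℂ (ℂ × ℂ) = 2 := by simp
      omega
    have hle : Submodule.span ℂ (Set.range π) ≤ LinearMap.ker g := by
      rw [Submodule.span_le]
      rintro w ⟨i, rfl⟩
      rw [SetLike.mem_coe, LinearMap.mem_ker]
      have hm : ∀ k : Fin 3, g (primalMat (x k) (y k) *ᵥ Pi.single b 1) = 0 := by
        intro k
        simp only [g, f1, LinearMap.prod_apply, LinearMap.coe_mk, AddHom.coe_mk,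
          LinearMap.proj_apply, Function.prod, Prod.mk_eq_zero]
        exact ⟨pm_dot_mem_zero (hmem k) _, pm_single_apply _ _ _⟩
      fin_cases i
      · exact hm 0
      · exact hm 1
      · exact hm 2
    have h3 : finrank ℂ (Submodule.span ℂ (Set.range π)) = 3 := by
      rw [finrank_span_eq_card hI]
      simp
    have hmono := Submodule.finrank_mono hle
    omega

lemma range_pair' (a b : Fin 4 → ℂ) : Set.range ![a, b] = {a, b} :=
  Matrix.range_cons_cons_empty a b _

lemma range_triple' (a b c : Fin 4 → ℂ) : Set.range ![a, b, c] = {a, b, c} := by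
  ext z; simp [Matrix.range_cons, Matrix.range_empty]; tauto

lemma backward (x y : Fin 3 → Fin 4 → ℂ) (ℓ : Fin 3 → Submodule ℂ (Fin 4 → ℂ))
    (hind : ∀ i, LinearIndependent ℂ ![x i, y i])
    (hspan : ∀ i, ℓ i = Submodule.span ℂ {x i, y i})
    (hint : ∀ i j, i ≠ j → ℓ i ⊓ ℓ j ≠ ⊥)
    (hdep : ∀ b : Fin 4, ¬ LinearIndependent ℂ
          ![primalMat (x 0) (y 0) *ᵥ Pi.single b 1,
            primalMat (x 1) (y 1) *ᵥ Pi.single b 1,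
            primalMat (x 2) (y 2) *ᵥ Pi.single b 1]) :
    ∃ v : Fin 4 → ℂ, v ≠ 0 ∧ ∀ i, v ∈ ℓ i := by
  obtain ⟨a, hamem, ha0⟩ := (Submodule.ne_bot_iff _).mp (hint 0 1 (by decide))
  obtain ⟨ha₀, ha₁⟩ := Submodule.mem_inf.mp hamem
  obtain ⟨bb, hbmem, hb0⟩ := (Submodule.ne_bot_iff _).mp (hint 0 2 (by decide))
  obtain ⟨hb₀, hb₂⟩ := Submodule.mem_inf.mp hbmem
  obtain ⟨c, hcmem, hc0⟩ := (Submodule.ne_bot_iff _).mp (hint 1 2 (by decide))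
  obtain ⟨hc₁, hc₂⟩ := Submodule.mem_inf.mp hcmem
  by_cases ha2 : a ∈ ℓ 2
  · exact ⟨a, ha0, fun i => by fin_cases i <;> assumption⟩
  by_cases hb1 : bb ∈ ℓ 1
  · exact ⟨bb, hb0, fun i => by fin_cases i <;> assumption⟩
  by_cases hc0' : c ∈ ℓ 0
  · exact ⟨c, hc0, fun i => by fin_cases i <;> assumption⟩
  exfalso
  -- finrank of the lines
  have hrank : ∀ i, finrank ℂ (ℓ i) = 2 := by
    intro i
    rw [hspan i, ← range_pair']
    rw [finrank_span_eq_card (hind i)]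
    simp
  -- pairwise independence
  have hab : LinearIndependent ℂ ![a, bb] := by
    rw [linearIndependent_fin2]
    refine ⟨by simpa using hb0, fun t ht => ?_⟩
    simp only [Matrix.cons_val_one, Matrix.head_cons, Matrix.cons_val_zero] at ht
    exact ha2 (ht ▸ Submodule.smul_mem _ t hb₂)
  have hac : LinearIndependent ℂ ![a, c] := by
    rw [linearIndependent_fin2]
    refine ⟨by simpa using hc0, fun t ht => ?_⟩
    simp only [Matrix.cons_val_one, Matrix.head_cons, Matrix.cons_val_zero] at ht
    exact ha2 (ht ▸ Submodule.smul_mem _ t hc₂)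
  have hbc : LinearIndependent ℂ ![bb, c] := by
    rw [linearIndependent_fin2]
    refine ⟨by simpa using hc0, fun t ht => ?_⟩
    simp only [Matrix.cons_val_one, Matrix.head_cons, Matrix.cons_val_zero] at ht
    exact hb1 (ht ▸ Submodule.smul_mem _ t hc₁)
  -- the lines are spanned by the intersection points
  have hsp0 : Submodule.span ℂ {a, bb} = ℓ 0 := by
    apply Submodule.eq_of_le_of_finrank_le
    · rw [Submodule.span_le]
      rintro z hz
      rcases hz with rfl | hz
      · exact ha₀
      · rw [Set.mem_singleton_iff] at hz; subst hz; exact hb₀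
    · rw [hrank 0, ← range_pair', finrank_span_eq_card hab]; simp
  have hsp1 : Submodule.span ℂ {a, c} = ℓ 1 := by
    apply Submodule.eq_of_le_of_finrank_le
    · rw [Submodule.span_le]
      rintro z hz
      rcases hz with rfl | hz
      · exact ha₁
      · rw [Set.mem_singleton_iff] at hz; subst hz; exact hc₁
    · rw [hrank 1, ← range_pair', finrank_span_eq_card hac]; simp
  have hsp2 : Submodule.span ℂ {bb, c} = ℓ 2 := by
    apply Submodule.eq_of_le_of_finrank_le
    · rw [Submodule.span_le]
      rintro z hz
      rcases hz with rfl | hz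
      · exact hb₂
      · rw [Set.mem_singleton_iff] at hz; subst hz; exact hc₂
    · rw [hrank 2, ← range_pair', finrank_span_eq_card hbc]; simp
  -- the triangle is independent and spans a hyperplane V
  have habc : LinearIndependent ℂ ![a, bb, c] :=
    li_triple hab (by rw [hsp0]; exact hc0')
  set V : Submodule ℂ (Fin 4 → ℂ) := Submodule.span ℂ {a, bb, c} with hVdef
  have hV3 : finrank ℂ V = 3 := by
    rw [hVdef, ← range_triple', finrank_span_eq_card habc]; simp
  have hl0V : ℓ 0 ≤ V := by
    rw [← hsp0]
    apply Submodule.span_mono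
    intro z hz; rcases hz with rfl | hz
    · exact Set.mem_insert _ _
    · rw [Set.mem_singleton_iff] at hz; subst hz
      exact Set.mem_insert_of_mem _ (Set.mem_insert _ _)
  have hl1V : ℓ 1 ≤ V := by
    rw [← hsp1]
    apply Submodule.span_mono
    intro z hz; rcases hz with rfl | hz
    · exact Set.mem_insert _ _
    · rw [Set.mem_singleton_iff] at hz; subst hz
      exact Set.mem_insert_of_mem _ (Set.mem_insert_of_mem _ rfl)
  have hl2V : ℓ 2 ≤ V := by
    rw [← hsp2]
    apply Submodule.span_mono
    intro z hz; rcases hz with rfl | hz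
    · exact Set.mem_insert_of_mem _ (Set.mem_insert _ _)
    · rw [Set.mem_singleton_iff] at hz; subst hz
      exact Set.mem_insert_of_mem _ (Set.mem_insert_of_mem _ rfl)
  have haV : a ∈ V := Submodule.subset_span (Set.mem_insert _ _)
  have hbV : bb ∈ V := Submodule.subset_span (Set.mem_insert_of_mem _ (Set.mem_insert _ _))
  have hcV : c ∈ V := Submodule.subset_span (Set.mem_insert_of_mem _ (Set.mem_insert_of_mem _ rfl))
  -- there is a standard basis vector outside V
  have hexb : ∃ b : Fin 4, (Pi.single b 1 : Fin 4 → ℂ) ∉ V := by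
    by_contra hall
    push_neg at hall
    have htop : V = ⊤ := by
      rw [Submodule.eq_top_iff']
      intro w
      have hw : w = ∑ k : Fin 4, w k • (Pi.single k 1 : Fin 4 → ℂ) := by
        funext m
        simp [Pi.single_apply, Finset.sum_apply]
      rw [hw]
      exact Submodule.sum_mem _ fun k _ => Submodule.smul_mem _ _ (hall k)
    rw [htop, finrank_top] at hV3
    simp at hV3
  obtain ⟨b, hbnotV⟩ := hexb
  -- span of a line plus a point of V is inside V
  have hXY : ∀ i, x i ∈ Submodule.span ℂ {x i, y i} ∧ y i ∈ Submodule.span ℂ {x i, y i} :=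
    fun i => ⟨Submodule.subset_span (Set.mem_insert _ _),
      Submodule.subset_span (Set.mem_insert_of_mem _ rfl)⟩
  have hspan3 : ∀ (i : Fin 3) (w : Fin 4 → ℂ), w ∈ V → ℓ i ≤ V →
      (Pi.single b 1 : Fin 4 → ℂ) ∉ Submodule.span ℂ {x i, y i, w} := by
    intro i w hwV hliV hmem
    apply hbnotV
    have hsub : Submodule.span ℂ ({x i, y i, w} : Set (Fin 4 → ℂ)) ≤ V := by
      rw [Submodule.span_le]
      rintro z hz
      rcases hz with rfl | hz
      · exact hliV ((hspan i) ▸ (hXY i).1)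
      rcases hz with rfl | hz
      · exact hliV ((hspan i) ▸ (hXY i).2)
      · rw [Set.mem_singleton_iff] at hz; subst hz; exact hwV
    exact hsub hmem
  -- the three nonvanishing dot products
  have N0 : c ⬝ᵥ (primalMat (x 0) (y 0) *ᵥ Pi.single b 1) ≠ 0 := by
    apply pm_dot_ne_zero
    apply li_quad
    · exact li_triple (hind 0) (by rw [← hspan 0]; exact hc0')
    · exact hspan3 0 c hcV hl0V
  have N1 : bb ⬝ᵥ (primalMat (x 1) (y 1) *ᵥ Pi.single b 1) ≠ 0 := by
    apply pm_dot_ne_zero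
    apply li_quad
    · exact li_triple (hind 1) (by rw [← hspan 1]; exact hb1)
    · exact hspan3 1 bb hbV hl1V
  have N2 : a ⬝ᵥ (primalMat (x 2) (y 2) *ᵥ Pi.single b 1) ≠ 0 := by
    apply pm_dot_ne_zero
    apply li_quad
    · exact li_triple (hind 2) (by rw [← hspan 2]; exact ha2)
    · exact hspan3 2 a haV hl2V
  -- extract a nontrivial dependence
  obtain ⟨g, hg0, i₀, hgi⟩ := Fintype.not_linearIndependent_iff.mp (hdep b)
  rw [Fin.sum_univ_three] at hg0
  simp only [Matrix.cons_val_zero, Matrix.cons_val_one, Matrix.head_cons,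
    Matrix.cons_val_two, Matrix.tail_cons] at hg0
  set π0 := primalMat (x 0) (y 0) *ᵥ Pi.single b 1
  set π1 := primalMat (x 1) (y 1) *ᵥ Pi.single b 1
  set π2 := primalMat (x 2) (y 2) *ᵥ Pi.single b 1
  have hdot : ∀ w : Fin 4 → ℂ,
      w ⬝ᵥ (g 0 • π0 + g 1 • π1 + g 2 • π2) = (0 : ℂ) := by
    intro w; rw [hg0]; simp
  have hexp : ∀ w : Fin 4 → ℂ,
      g 0 * (w ⬝ᵥ π0) + g 1 * (w ⬝ᵥ π1) + g 2 * (w ⬝ᵥ π2) = 0 := by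
    intro w
    have := hdot w
    simpa [dotProduct_add, dotProduct_smul, smul_eq_mul] using this
  have hg0' : g 0 = 0 := by
    have h := hexp c
    rw [pm_dot_mem_zero ((hspan 1) ▸ hc₁ : c ∈ Submodule.span ℂ {x 1, y 1}),
        pm_dot_mem_zero ((hspan 2) ▸ hc₂ : c ∈ Submodule.span ℂ {x 2, y 2})] at h
    simp at h
    rcases h with h | h
    · exact h
    · exact absurd h N0
  have hg1' : g 1 = 0 := by
    have h := hexp bb
    rw [pm_dot_mem_zero ((hspan 0) ▸ hb₀ : bb ∈ Submodule.span ℂ {x 0, y 0}),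
        pm_dot_mem_zero ((hspan 2) ▸ hb₂ : bb ∈ Submodule.span ℂ {x 2, y 2})] at h
    simp at h
    rcases h with h | h
    · exact h
    · exact absurd h N1
  have hg2' : g 2 = 0 := by
    have h := hexp a
    rw [pm_dot_mem_zero ((hspan 0) ▸ ha₀ : a ∈ Submodule.span ℂ {x 0, y 0}),
        pm_dot_mem_zero ((hspan 1) ▸ ha₁ : a ∈ Submodule.span ℂ {x 1, y 1})] at h
    simp at h
    rcases h with h | h
    · exact h
    · exact absurd h N2
  fin_cases i₀ <;> simp_all

/-- three lines in P³ are concurrent iff they are pairwise intersecting and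
for each standard basis vector `u` the three vectors `P₁u, P₂u, P₃u` are linearly dependent. -/
theorem three_lines_concurrent_iff
    (x y : Fin 3 → Fin 4 → ℂ) (ℓ : Fin 3 → Submodule ℂ (Fin 4 → ℂ))
    (hind : ∀ i, LinearIndependent ℂ ![x i, y i])
    (hspan : ∀ i, ℓ i = Submodule.span ℂ {x i, y i}) :
    (∃ v : Fin 4 → ℂ, v ≠ 0 ∧ ∀ i, v ∈ ℓ i) ↔
      ((∀ i j, i ≠ j → ℓ i ⊓ ℓ j ≠ ⊥) ∧
        ∀ b : Fin 4, ¬ LinearIndependent ℂ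
          ![primalMat (x 0) (y 0) *ᵥ Pi.single b 1,
            primalMat (x 1) (y 1) *ᵥ Pi.single b 1,
            primalMat (x 2) (y 2) *ᵥ Pi.single b 1]) := by
  constructor
  · rintro ⟨v, hv0, hv⟩
    refine ⟨fun i j hij => ?_, fun b => forward_dep x y ℓ hspan v hv0 hv b⟩
    rw [Submodule.ne_bot_iff]
    exact ⟨v, Submodule.mem_inf.mpr ⟨hv i, hv j⟩, hv0⟩
  · rintro ⟨hint, hdep⟩
    exact backward x y ℓ hind hspan hint hdep
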